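/- Let k be an algebraically closed field with char k ≠ 2, let n ≥ 4 and let i satisfy 2 ≤ i ≤ n−2. With rows and columns indexed by I = {1,…,n,0,−n,…,−1}, let J be the symmetric (2n+1)×(2n+1) matrix with J_{0,0} = 1, J_{a,−a} = J_{−a,a} = 1 for 1 ≤ a ≤ n, and all other entries 0, and let e = Σ_{j=1, j≠i}^{n-1} (E_{j,j+1} − E_{−(j+1),−j}) + (E_{n,0} − E_{0,−n}) + (E_{i,i+2} − E_{−(i+2),−i}). Then: (i) eᵀJ + Je = 0, i.e. e ∈ so_{2n+1}(k); (ii) e^{2n-1} = 0 and e^{2n-2} ≠ 0; (iii) rank(e) = 2n−2. Consequently e is nilpotent of Jordan type (2n−1,1,1), i.e. e lies in the subregular nilpotent orbit of so_{2n+1}(k). -/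

import Mathlib

open Matrix

/-- The elementary `(2n+1) × (2n+1)` matrix `E a b`, with rows and columns indexed by
`I = {1, …, n, 0, -n, …, -1}` (in this order, corresponding to the ordered basis
`v_1, …, v_n, v_0, v_{-n}, …, v_{-1}`): its `(a, b)` entry is `1` and all other entries
are `0`. -/
def Eodd (n : ℕ) (k : Type*) [Field k] (a b : ℤ) :
    Matrix (Fin (2 * n + 1)) (Fin (2 * n + 1)) k :=
  Matrix.of fun p q =>
    if ((p : ℕ) : ℤ) = (if 0 < a then a - 1 else if a = 0 then (n : ℤ) else 2 * n + 1 + a)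
        ∧ ((q : ℕ) : ℤ) = (if 0 < b then b - 1 else if b = 0 then (n : ℤ) else 2 * n + 1 + b)
      then 1 else 0

/-- The Gram matrix `J` of the symmetric bilinear form on `k^{2n+1}` with
`(v_0, v_0) = 1`, `(v_a, v_{-a}) = (v_{-a}, v_a) = 1` for `1 ≤ a ≤ n`, and all other
pairings of basis vectors `0`. -/
def Jodd (n : ℕ) (k : Type*) [Field k] :
    Matrix (Fin (2 * n + 1)) (Fin (2 * n + 1)) k :=
  Eodd n k 0 0 + ∑ a ∈ Finset.Icc 1 n, (Eodd n k (a : ℤ) (-(a : ℤ)) + Eodd n k (-(a : ℤ)) (a : ℤ))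

/-- entry function of `e` -/
def G (k : Type*) [Field k] (n i p q : ℕ) : k :=
  ((if q ≠ i ∧ 1 ≤ q ∧ q ≤ n - 1 then (if p + 1 = q then (1:k) else 0) else 0)
   - (if 2*n+1-q ≠ i ∧ 1 ≤ 2*n+1-q ∧ 2*n+1-q ≤ n - 1 then (if p + 1 = q then (1:k) else 0) else 0))
  + ((if p = n - 1 ∧ q = n then (1:k) else 0) - (if p = n ∧ q = n + 1 then (1:k) else 0))
  + ((if p = i - 1 ∧ q = i + 1 then (1:k) else 0) - (if p = 2*n-1-i ∧ q = 2*n+1-i then (1:k) else 0))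

lemma ite_and_zero {k : Type*} [Field k] {P Q : Prop} [Decidable P] [Decidable Q] (x : k) :
    (if P ∧ Q then x else 0) = if P then (if Q then x else 0) else 0 := by
  split_ifs <;> tauto

lemma e_entry {k : Type*} [Field k] {n i : ℕ} (hn : 4 ≤ n) (hi1 : 2 ≤ i) (hi2 : i + 2 ≤ n)
    (e : Matrix (Fin (2 * n + 1)) (Fin (2 * n + 1)) k)
    (he : e = (∑ j ∈ (Finset.Icc 1 (n - 1)).erase i,
        (Eodd n k (j : ℤ) ((j : ℤ) + 1) - Eodd n k (-((j : ℤ) + 1)) (-(j : ℤ)))) +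
      (Eodd n k (n : ℤ) 0 - Eodd n k 0 (-(n : ℤ))) +
      (Eodd n k (i : ℤ) ((i : ℤ) + 2) - Eodd n k (-((i : ℤ) + 2)) (-(i : ℤ))))
    (p q : Fin (2 * n + 1)) : e p q = G k n i (p : ℕ) (q : ℕ) := by
  have hp : (p : ℕ) < 2 * n + 1 := p.isLt
  have hq : (q : ℕ) < 2 * n + 1 := q.isLt
  subst he
  simp only [Matrix.add_apply, Matrix.sub_apply, Matrix.sum_apply, Eodd, Matrix.of_apply]
  have hsum : ∀ j ∈ (Finset.Icc 1 (n - 1)).erase i,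
      ((if ((p : ℕ) : ℤ) = (if 0 < (j:ℤ) then (j:ℤ) - 1 else if (j:ℤ) = 0 then (n : ℤ) else 2 * n + 1 + j)
        ∧ ((q : ℕ) : ℤ) = (if 0 < (j:ℤ)+1 then (j:ℤ)+1 - 1 else if (j:ℤ)+1 = 0 then (n : ℤ) else 2 * n + 1 + ((j:ℤ)+1))
        then (1:k) else 0) -
      (if ((p : ℕ) : ℤ) = (if 0 < -((j:ℤ)+1) then -((j:ℤ)+1) - 1 else if -((j:ℤ)+1) = 0 then (n : ℤ) else 2 * n + 1 + (-((j:ℤ)+1)))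
        ∧ ((q : ℕ) : ℤ) = (if 0 < -(j:ℤ) then -(j:ℤ) - 1 else if -(j:ℤ) = 0 then (n : ℤ) else 2 * n + 1 + (-(j:ℤ)))
        then (1:k) else 0)) =
      ((if j = (q : ℕ) then (if (p:ℕ) + 1 = (q:ℕ) then (1:k) else 0) else 0) -
       (if j = 2*n+1 - (q : ℕ) then (if (p:ℕ) + 1 = (q:ℕ) then (1:k) else 0) else 0)) := by
    intro j hj
    simp only [Finset.mem_erase, Finset.mem_Icc] at hj
    have h1 : 1 ≤ j := hj.2.1
    have h2 : j ≤ n - 1 := hj.2.2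
    congr 1 <;> split_ifs <;> first | rfl | (exfalso; omega) | simp_all
  rw [Finset.sum_congr rfl hsum, Finset.sum_sub_distrib, Finset.sum_ite_eq', Finset.sum_ite_eq']
  have h2 : ((if ((p : ℕ) : ℤ) = (if 0 < (n:ℤ) then (n:ℤ) - 1 else if (n:ℤ) = 0 then (n : ℤ) else 2 * n + 1 + n)
        ∧ ((q : ℕ) : ℤ) = (if 0 < (0:ℤ) then (0:ℤ) - 1 else if True then (n : ℤ) else 2 * n + 1 + 0)
        then (1:k) else 0) -
      (if ((p : ℕ) : ℤ) = (if 0 < (0:ℤ) then (0:ℤ) - 1 else if True then (n : ℤ) else 2 * n + 1 + 0)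
        ∧ ((q : ℕ) : ℤ) = (if 0 < -(n:ℤ) then -(n:ℤ) - 1 else if -(n:ℤ) = 0 then (n : ℤ) else 2 * n + 1 + (-(n:ℤ)))
        then (1:k) else 0)) =
      ((if (p:ℕ) = n - 1 ∧ (q:ℕ) = n then (1:k) else 0) - (if (p:ℕ) = n ∧ (q:ℕ) = n + 1 then (1:k) else 0)) := by
    congr 1 <;> split_ifs <;> first | rfl | (exfalso; omega) | simp_all
  have h3 : ((if ((p : ℕ) : ℤ) = (if 0 < (i:ℤ) then (i:ℤ) - 1 else if (i:ℤ) = 0 then (n : ℤ) else 2 * n + 1 + i)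
        ∧ ((q : ℕ) : ℤ) = (if 0 < (i:ℤ)+2 then (i:ℤ)+2 - 1 else if (i:ℤ)+2 = 0 then (n : ℤ) else 2 * n + 1 + ((i:ℤ)+2))
        then (1:k) else 0) -
      (if ((p : ℕ) : ℤ) = (if 0 < -((i:ℤ)+2) then -((i:ℤ)+2) - 1 else if -((i:ℤ)+2) = 0 then (n : ℤ) else 2 * n + 1 + (-((i:ℤ)+2)))
        ∧ ((q : ℕ) : ℤ) = (if 0 < -(i:ℤ) then -(i:ℤ) - 1 else if -(i:ℤ) = 0 then (n : ℤ) else 2 * n + 1 + (-(i:ℤ)))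
        then (1:k) else 0)) =
      ((if (p:ℕ) = i - 1 ∧ (q:ℕ) = i + 1 then (1:k) else 0) - (if (p:ℕ) = 2*n-1-i ∧ (q:ℕ) = 2*n+1-i then (1:k) else 0)) := by
    congr 1 <;> split_ifs <;> first | rfl | (exfalso; omega) | simp_all
  rw [h2, h3]
  simp only [Finset.mem_erase, Finset.mem_Icc]
  rfl

lemma J_entry {k : Type*} [Field k] {n : ℕ} (p q : Fin (2 * n + 1)) :
    Jodd n k p q = if (p : ℕ) + (q : ℕ) = 2 * n then (1:k) else 0 := by
  have hp : (p : ℕ) < 2 * n + 1 := p.isLt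
  have hq : (q : ℕ) < 2 * n + 1 := q.isLt
  unfold Jodd
  simp only [Matrix.add_apply, Matrix.sum_apply, Eodd, Matrix.of_apply]
  have hsum : ∀ a ∈ Finset.Icc 1 n,
      ((if ((p : ℕ) : ℤ) = (if 0 < (a:ℤ) then (a:ℤ) - 1 else if (a:ℤ) = 0 then (n : ℤ) else 2 * n + 1 + a)
        ∧ ((q : ℕ) : ℤ) = (if 0 < -(a:ℤ) then -(a:ℤ) - 1 else if -(a:ℤ) = 0 then (n : ℤ) else 2 * n + 1 + (-(a:ℤ)))
        then (1:k) else 0) +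
      (if ((p : ℕ) : ℤ) = (if 0 < -(a:ℤ) then -(a:ℤ) - 1 else if -(a:ℤ) = 0 then (n : ℤ) else 2 * n + 1 + (-(a:ℤ)))
        ∧ ((q : ℕ) : ℤ) = (if 0 < (a:ℤ) then (a:ℤ) - 1 else if (a:ℤ) = 0 then (n : ℤ) else 2 * n + 1 + a)
        then (1:k) else 0)) =
      ((if a = (p:ℕ) + 1 then (if (p:ℕ) + (q:ℕ) = 2*n ∧ (p:ℕ) + 1 ≤ n then (1:k) else 0) else 0) +
       (if a = (q:ℕ) + 1 then (if (p:ℕ) + (q:ℕ) = 2*n ∧ (q:ℕ) + 1 ≤ n then (1:k) else 0) else 0)) := by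
    intro a ha
    simp only [Finset.mem_Icc] at ha
    congr 1 <;> split_ifs <;> first | rfl | (exfalso; omega)
  rw [Finset.sum_congr rfl hsum, Finset.sum_add_distrib, Finset.sum_ite_eq', Finset.sum_ite_eq']
  simp only [Finset.mem_Icc]
  split_ifs <;> first | (exfalso; omega) | norm_num

lemma sum_fin_ind {k : Type*} [Field k] {N : ℕ} (t : ℕ) (ht : t < N) (f : Fin N → k) :
    (∑ r : Fin N, if (r : ℕ) = t then f r else 0) = f ⟨t, ht⟩ := by
  rw [Finset.sum_eq_single (⟨t, ht⟩ : Fin N)]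
  · simp
  · intro b _ hb
    rw [if_neg (fun h => hb (Fin.ext h))]
  · intro h
    exact absurd (Finset.mem_univ _) h

lemma G_antisym {k : Type*} [Field k] {n i : ℕ} (hn : 4 ≤ n) (hi1 : 2 ≤ i) (hi2 : i + 2 ≤ n)
    (a b : ℕ) (ha : a ≤ 2 * n) (hb : b ≤ 2 * n) :
    G k n i a b + G k n i (2 * n - b) (2 * n - a) = 0 := by
  unfold G
  have h1 : (if 2*n-a ≠ i ∧ 1 ≤ 2*n-a ∧ 2*n-a ≤ n - 1 then (if (2*n-b) + 1 = 2*n-a then (1:k) else 0) else 0)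
      = (if 2*n+1-b ≠ i ∧ 1 ≤ 2*n+1-b ∧ 2*n+1-b ≤ n - 1 then (if a + 1 = b then (1:k) else 0) else 0) := by
    split_ifs <;> first | rfl | (exfalso; omega)
  have h2 : (if 2*n+1-(2*n-a) ≠ i ∧ 1 ≤ 2*n+1-(2*n-a) ∧ 2*n+1-(2*n-a) ≤ n - 1 then (if (2*n-b) + 1 = 2*n-a then (1:k) else 0) else 0)
      = (if b ≠ i ∧ 1 ≤ b ∧ b ≤ n - 1 then (if a + 1 = b then (1:k) else 0) else 0) := by
    split_ifs <;> first | rfl | (exfalso; omega)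
  have h3 : (if 2*n-b = n - 1 ∧ 2*n-a = n then (1:k) else 0) = (if a = n ∧ b = n + 1 then (1:k) else 0) := by
    split_ifs <;> first | rfl | (exfalso; omega)
  have h4 : (if 2*n-b = n ∧ 2*n-a = n + 1 then (1:k) else 0) = (if a = n - 1 ∧ b = n then (1:k) else 0) := by
    split_ifs <;> first | rfl | (exfalso; omega)
  have h5 : (if 2*n-b = i - 1 ∧ 2*n-a = i + 1 then (1:k) else 0) = (if a = 2*n-1-i ∧ b = 2*n+1-i then (1:k) else 0) := by
    split_ifs <;> first | rfl | (exfalso; omega)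
  have h6 : (if 2*n-b = 2*n-1-i ∧ 2*n-a = 2*n+1-i then (1:k) else 0) = (if a = i - 1 ∧ b = i + 1 then (1:k) else 0) := by
    split_ifs <;> first | rfl | (exfalso; omega)
  rw [h1, h2, h3, h4, h5, h6]
  ring

lemma so_condition {k : Type*} [Field k] {n i : ℕ} (hn : 4 ≤ n) (hi1 : 2 ≤ i) (hi2 : i + 2 ≤ n)
    (e : Matrix (Fin (2 * n + 1)) (Fin (2 * n + 1)) k)
    (hE : ∀ p q : Fin (2 * n + 1), e p q = G k n i (p : ℕ) (q : ℕ)) :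
    eᵀ * Jodd n k + Jodd n k * e = 0 := by
  ext p q
  have hp : (p : ℕ) < 2 * n + 1 := p.isLt
  have hq : (q : ℕ) < 2 * n + 1 := q.isLt
  rw [Matrix.add_apply, Matrix.mul_apply, Matrix.mul_apply, Matrix.zero_apply]
  have s1 : (∑ j : Fin (2*n+1), eᵀ p j * Jodd n k j q) = G k n i (2*n - (q:ℕ)) (p:ℕ) := by
    rw [Finset.sum_congr rfl (fun j _ => by
      rw [Matrix.transpose_apply, J_entry, hE,
        show (if ((j:ℕ) + (q:ℕ) = 2*n) then (1:k) else 0) = (if (j:ℕ) = 2*n - (q:ℕ) then 1 else 0) from by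
          split_ifs <;> first | rfl | (exfalso; omega),
        mul_ite, mul_one, mul_zero])]
    rw [sum_fin_ind (2*n - (q:ℕ)) (by omega) (fun j : Fin (2*n+1) => G k n i (j:ℕ) (p:ℕ))]
  have s2 : (∑ j : Fin (2*n+1), Jodd n k p j * e j q) = G k n i (2*n - (p:ℕ)) (q:ℕ) := by
    rw [Finset.sum_congr rfl (fun j _ => by
      rw [J_entry, hE,
        show (if ((p:ℕ) + (j:ℕ) = 2*n) then (1:k) else 0) = (if (j:ℕ) = 2*n - (p:ℕ) then 1 else 0) from by
          split_ifs <;> first | rfl | (exfalso; omega),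
        ite_mul, one_mul, zero_mul])]
    rw [sum_fin_ind (2*n - (p:ℕ)) (by omega) (fun j : Fin (2*n+1) => G k n i (j:ℕ) (q:ℕ))]
  rw [s1, s2]
  have := G_antisym (k := k) hn hi1 hi2 (2*n - (q:ℕ)) (p:ℕ) (by omega) (by omega)
  rwa [show 2*n - (2*n - (q:ℕ)) = (q:ℕ) from by omega] at this

section Cols
variable {k : Type*} [Field k] {n i : ℕ}

lemma colC0 (hn : 4 ≤ n) (hi1 : 2 ≤ i) (hi2 : i + 2 ≤ n) (a q : ℕ) (hq : q = 0 ∨ q = i) :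
    G k n i a q = 0 := by
  unfold G
  rw [if_neg (show ¬(q ≠ i ∧ 1 ≤ q ∧ q ≤ n - 1) by omega),
      if_neg (show ¬(2*n+1-q ≠ i ∧ 1 ≤ 2*n+1-q ∧ 2*n+1-q ≤ n - 1) by omega),
      if_neg (show ¬(a = n - 1 ∧ q = n) by omega),
      if_neg (show ¬(a = n ∧ q = n + 1) by omega),
      if_neg (show ¬(a = i - 1 ∧ q = i + 1) by omega),
      if_neg (show ¬(a = 2*n-1-i ∧ q = 2*n+1-i) by omega)]
  ring

lemma colC1 (hn : 4 ≤ n) (hi1 : 2 ≤ i) (hi2 : i + 2 ≤ n) (a q : ℕ)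
    (h1 : 1 ≤ q) (h2 : q ≤ n) (h3 : q ≠ i) (h4 : q ≠ i + 1) :
    G k n i a q = if a + 1 = q then 1 else 0 := by
  unfold G
  by_cases hq : q ≤ n - 1
  · rw [if_pos (show q ≠ i ∧ 1 ≤ q ∧ q ≤ n - 1 from ⟨h3, h1, hq⟩),
        if_neg (show ¬(2*n+1-q ≠ i ∧ 1 ≤ 2*n+1-q ∧ 2*n+1-q ≤ n - 1) by omega),
        if_neg (show ¬(a = n - 1 ∧ q = n) by omega),
        if_neg (show ¬(a = n ∧ q = n + 1) by omega),
        if_neg (show ¬(a = i - 1 ∧ q = i + 1) by omega),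
        if_neg (show ¬(a = 2*n-1-i ∧ q = 2*n+1-i) by omega)]
    ring
  · rw [if_neg (show ¬(q ≠ i ∧ 1 ≤ q ∧ q ≤ n - 1) by omega),
        if_neg (show ¬(2*n+1-q ≠ i ∧ 1 ≤ 2*n+1-q ∧ 2*n+1-q ≤ n - 1) by omega),
        if_neg (show ¬(a = n ∧ q = n + 1) by omega),
        if_neg (show ¬(a = i - 1 ∧ q = i + 1) by omega),
        if_neg (show ¬(a = 2*n-1-i ∧ q = 2*n+1-i) by omega)]
    split_ifs <;> first | (exfalso; omega) | ring

lemma colC2 (hn : 4 ≤ n) (hi1 : 2 ≤ i) (hi2 : i + 2 ≤ n) (a : ℕ) :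
    G k n i a (i + 1) = if a = i - 1 ∨ a = i then 1 else 0 := by
  unfold G
  rw [if_pos (show i + 1 ≠ i ∧ 1 ≤ i + 1 ∧ i + 1 ≤ n - 1 by omega),
      if_neg (show ¬(2*n+1-(i+1) ≠ i ∧ 1 ≤ 2*n+1-(i+1) ∧ 2*n+1-(i+1) ≤ n - 1) by omega),
      if_neg (show ¬(a = n - 1 ∧ i + 1 = n) by omega),
      if_neg (show ¬(a = n ∧ i + 1 = n + 1) by omega),
      if_neg (show ¬(a = 2*n-1-i ∧ i + 1 = 2*n+1-i) by omega)]
  split_ifs <;> first | (exfalso; omega) | ring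

lemma colC3 (hn : 4 ≤ n) (hi1 : 2 ≤ i) (hi2 : i + 2 ≤ n) (a q : ℕ)
    (h1 : n + 1 ≤ q) (h2 : q ≤ 2 * n) (h3 : q ≠ 2 * n + 1 - i) :
    G k n i a q = if a + 1 = q then -1 else 0 := by
  unfold G
  by_cases hq : q = n + 1
  · rw [if_neg (show ¬(q ≠ i ∧ 1 ≤ q ∧ q ≤ n - 1) by omega),
        if_neg (show ¬(2*n+1-q ≠ i ∧ 1 ≤ 2*n+1-q ∧ 2*n+1-q ≤ n - 1) by omega),
        if_neg (show ¬(a = n - 1 ∧ q = n) by omega),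
        if_neg (show ¬(a = i - 1 ∧ q = i + 1) by omega),
        if_neg (show ¬(a = 2*n-1-i ∧ q = 2*n+1-i) by omega)]
    split_ifs <;> first | (exfalso; omega) | ring
  · rw [if_neg (show ¬(q ≠ i ∧ 1 ≤ q ∧ q ≤ n - 1) by omega),
        if_pos (show 2*n+1-q ≠ i ∧ 1 ≤ 2*n+1-q ∧ 2*n+1-q ≤ n - 1 by omega),
        if_neg (show ¬(a = n - 1 ∧ q = n) by omega),
        if_neg (show ¬(a = n ∧ q = n + 1) by omega),
        if_neg (show ¬(a = i - 1 ∧ q = i + 1) by omega),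
        if_neg (show ¬(a = 2*n-1-i ∧ q = 2*n+1-i) by omega)]
    split_ifs <;> first | (exfalso; omega) | ring

lemma colC4 (hn : 4 ≤ n) (hi1 : 2 ≤ i) (hi2 : i + 2 ≤ n) (a : ℕ) :
    G k n i a (2 * n + 1 - i) = if a = 2 * n - 1 - i then -1 else 0 := by
  unfold G
  rw [if_neg (show ¬(2*n+1-i ≠ i ∧ 1 ≤ 2*n+1-i ∧ 2*n+1-i ≤ n - 1) by omega),
      if_neg (show ¬(2*n+1-(2*n+1-i) ≠ i ∧ 1 ≤ 2*n+1-(2*n+1-i) ∧ 2*n+1-(2*n+1-i) ≤ n - 1) by omega),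
      if_neg (show ¬(a = n - 1 ∧ 2*n+1-i = n) by omega),
      if_neg (show ¬(a = n ∧ 2*n+1-i = n + 1) by omega),
      if_neg (show ¬(a = i - 1 ∧ 2*n+1-i = i + 1) by omega)]
  split_ifs <;> first | (exfalso; omega) | ring

/-- weight function -/
def W (n i q : ℕ) : ℕ := if q ≤ i - 1 then q else if q ≤ 2 * n - i then q - 1 else q - 2

lemma G_ne_imp (hn : 4 ≤ n) (hi1 : 2 ≤ i) (hi2 : i + 2 ≤ n) (a b : ℕ)
    (hne : G k n i a b ≠ 0) :
    (a + 1 = b ∧ 1 ≤ b ∧ b ≤ 2 * n ∧ b ≠ i ∧ b ≠ 2 * n + 1 - i) ∨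
      (b = i + 1 ∧ (a = i - 1 ∨ a = i)) ∨
      (b = 2 * n + 1 - i ∧ a = 2 * n - 1 - i) := by
  by_contra hD
  apply hne
  unfold G
  by_cases hab : a + 1 = b
  · simp only [if_pos hab]
    rw [if_neg (show ¬(b ≠ i ∧ 1 ≤ b ∧ b ≤ n - 1) by omega),
        if_neg (show ¬(2*n+1-b ≠ i ∧ 1 ≤ 2*n+1-b ∧ 2*n+1-b ≤ n - 1) by omega),
        if_neg (show ¬(a = n - 1 ∧ b = n) by omega),
        if_neg (show ¬(a = n ∧ b = n + 1) by omega),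
        if_neg (show ¬(a = i - 1 ∧ b = i + 1) by omega),
        if_neg (show ¬(a = 2*n-1-i ∧ b = 2*n+1-i) by omega)]
    ring
  · simp only [if_neg hab, ite_self]
    rw [if_neg (show ¬(a = n - 1 ∧ b = n) by omega),
        if_neg (show ¬(a = n ∧ b = n + 1) by omega),
        if_neg (show ¬(a = i - 1 ∧ b = i + 1) by omega),
        if_neg (show ¬(a = 2*n-1-i ∧ b = 2*n+1-i) by omega)]
    ring

lemma W_step (hn : 4 ≤ n) (hi1 : 2 ≤ i) (hi2 : i + 2 ≤ n) (a b : ℕ)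
    (h : (a + 1 = b ∧ 1 ≤ b ∧ b ≤ 2 * n ∧ b ≠ i ∧ b ≠ 2 * n + 1 - i) ∨
      (b = i + 1 ∧ (a = i - 1 ∨ a = i)) ∨
      (b = 2 * n + 1 - i ∧ a = 2 * n - 1 - i)) : W n i a + 1 ≤ W n i b := by
  unfold W; split_ifs <;> omega

lemma W_le (hn : 4 ≤ n) (hi1 : 2 ≤ i) (hi2 : i + 2 ≤ n) (q : ℕ) (hq : q ≤ 2 * n) :
    W n i q ≤ 2 * n - 2 := by
  unfold W; split_ifs <;> omega

lemma pow_w (hn : 4 ≤ n) (hi1 : 2 ≤ i) (hi2 : i + 2 ≤ n)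
    (e : Matrix (Fin (2 * n + 1)) (Fin (2 * n + 1)) k)
    (hE : ∀ p q : Fin (2 * n + 1), e p q = G k n i (p : ℕ) (q : ℕ)) :
    ∀ m (p q : Fin (2 * n + 1)), (e ^ m) p q ≠ 0 → W n i (p : ℕ) + m ≤ W n i (q : ℕ) := by
  intro m
  induction m with
  | zero =>
    intro p q h
    rw [pow_zero, Matrix.one_apply] at h
    have : p = q := by by_contra hne; exact h (if_neg hne)
    subst this; omega
  | succ m ih =>
    intro p q h
    rw [pow_succ', Matrix.mul_apply] at h
    obtain ⟨r, -, hr⟩ := Finset.exists_ne_zero_of_sum_ne_zero h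
    have h1 : e p r ≠ 0 := left_ne_zero_of_mul hr
    have h2 : (e ^ m) r q ≠ 0 := right_ne_zero_of_mul hr
    rw [hE] at h1
    have := W_step hn hi1 hi2 _ _ (G_ne_imp hn hi1 hi2 _ _ h1)
    have := ih r q h2
    omega

lemma e_nilpotent (hn : 4 ≤ n) (hi1 : 2 ≤ i) (hi2 : i + 2 ≤ n)
    (e : Matrix (Fin (2 * n + 1)) (Fin (2 * n + 1)) k)
    (hE : ∀ p q : Fin (2 * n + 1), e p q = G k n i (p : ℕ) (q : ℕ)) :
    e ^ (2 * n - 1) = 0 := by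
  ext p q
  rw [Matrix.zero_apply]
  by_contra h
  have h1 := pow_w hn hi1 hi2 e hE (2 * n - 1) p q h
  have h2 := W_le hn hi1 hi2 (q : ℕ) (by have := q.isLt; omega)
  omega

end Cols

section Chain
variable {k : Type*} [Field k] {n i : ℕ}

lemma mv_ind (e : Matrix (Fin (2 * n + 1)) (Fin (2 * n + 1)) k)
    (hE : ∀ p q : Fin (2 * n + 1), e p q = G k n i (p : ℕ) (q : ℕ))
    (t : ℕ) (ht : t < 2 * n + 1) :
    e *ᵥ (fun r : Fin (2 * n + 1) => if (r : ℕ) = t then (1:k) else 0) =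
      fun p : Fin (2 * n + 1) => G k n i (p : ℕ) t := by
  funext p
  show (∑ r, e p r * if (r : ℕ) = t then (1:k) else 0) = _
  simp only [mul_ite, mul_one, mul_zero]
  rw [sum_fin_ind t ht (fun r => e p r), hE]

def PSI (n i m : ℕ) : ℕ := if m ≤ i - 1 then 2 * n - m else 2 * n - 1 - m

def VF (k : Type*) [Field k] (n i m p : ℕ) : k :=
  if m ≤ 2 * n - 2 - i then (if p = PSI n i m then 1 else 0)
  else if m = 2 * n - 1 - i then (if p = i - 1 ∨ p = i then 1 else 0)
  else (if p = 2 * n - 2 - m then 1 else 0)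

set_option maxHeartbeats 2000000 in
lemma chain (hn : 4 ≤ n) (hi1 : 2 ≤ i) (hi2 : i + 2 ≤ n)
    (e : Matrix (Fin (2 * n + 1)) (Fin (2 * n + 1)) k)
    (hE : ∀ p q : Fin (2 * n + 1), e p q = G k n i (p : ℕ) (q : ℕ)) :
    ∀ m, m ≤ 2 * n - 2 → ∃ c : k, c ≠ 0 ∧
      (e ^ m) *ᵥ (fun r : Fin (2 * n + 1) => VF k n i 0 (r : ℕ)) =
        c • (fun p : Fin (2 * n + 1) => VF k n i m (p : ℕ)) := by
  intro m
  induction m with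
  | zero =>
    intro _
    exact ⟨1, one_ne_zero, by rw [pow_zero, Matrix.one_mulVec, one_smul]⟩
  | succ m ih =>
    intro hm1
    obtain ⟨c, hc, hv⟩ := ih (by omega)
    rw [pow_succ', ← Matrix.mulVec_mulVec, hv, Matrix.mulVec_smul]
    -- case analysis on m
    by_cases hA : m ≤ i - 2
    · -- T = 2n - m, class C3, d = -1
      have hVm : (fun r : Fin (2 * n + 1) => VF k n i m (r : ℕ)) =
          (fun r : Fin (2 * n + 1) => if (r : ℕ) = 2 * n - m then (1:k) else 0) := by
        funext r; unfold VF PSI; split_ifs <;> first | rfl | (exfalso; omega)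
      refine ⟨-c, neg_ne_zero.mpr hc, ?_⟩
      rw [hVm, mv_ind e hE (2 * n - m) (by omega)]
      funext p
      simp only [Pi.smul_apply, smul_eq_mul]
      rw [colC3 hn hi1 hi2 (p : ℕ) (2 * n - m) (by omega) (by omega) (by omega)]
      unfold VF PSI
      split_ifs <;> first | (exfalso; omega) | ring
    · by_cases hB : m = i - 1
      · -- T = 2n+1-i, class C4, d = -1
        have hVm : (fun r : Fin (2 * n + 1) => VF k n i m (r : ℕ)) =
            (fun r : Fin (2 * n + 1) => if (r : ℕ) = 2 * n + 1 - i then (1:k) else 0) := by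
          funext r; unfold VF PSI; split_ifs <;> first | rfl | (exfalso; omega)
        refine ⟨-c, neg_ne_zero.mpr hc, ?_⟩
        rw [hVm, mv_ind e hE (2 * n + 1 - i) (by omega)]
        funext p
        simp only [Pi.smul_apply, smul_eq_mul]
        rw [colC4 hn hi1 hi2 (p : ℕ)]
        unfold VF PSI
        split_ifs <;> first | (exfalso; omega) | ring
      · by_cases hC : m ≤ 2 * n - 3 - i
        · -- i ≤ m ≤ 2n-3-i : T = 2n-1-m
          have hVm : (fun r : Fin (2 * n + 1) => VF k n i m (r : ℕ)) =
              (fun r : Fin (2 * n + 1) => if (r : ℕ) = 2 * n - 1 - m then (1:k) else 0) := by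
            funext r; unfold VF PSI; split_ifs <;> first | rfl | (exfalso; omega)
          by_cases hT : 2 * n - 1 - m ≤ n
          · refine ⟨c, hc, ?_⟩
            rw [hVm, mv_ind e hE (2 * n - 1 - m) (by omega)]
            funext p
            simp only [Pi.smul_apply, smul_eq_mul]
            rw [colC1 hn hi1 hi2 (p : ℕ) (2 * n - 1 - m) (by omega) (by omega) (by omega) (by omega)]
            unfold VF PSI
            split_ifs <;> first | (exfalso; omega) | ring
          · refine ⟨-c, neg_ne_zero.mpr hc, ?_⟩
            rw [hVm, mv_ind e hE (2 * n - 1 - m) (by omega)]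
            funext p
            simp only [Pi.smul_apply, smul_eq_mul]
            rw [colC3 hn hi1 hi2 (p : ℕ) (2 * n - 1 - m) (by omega) (by omega) (by omega)]
            unfold VF PSI
            split_ifs <;> first | (exfalso; omega) | ring
        · by_cases hD : m = 2 * n - 2 - i
          · -- T = i+1, class C2, d = 1
            have hVm : (fun r : Fin (2 * n + 1) => VF k n i m (r : ℕ)) =
                (fun r : Fin (2 * n + 1) => if (r : ℕ) = i + 1 then (1:k) else 0) := by
              funext r; unfold VF PSI; split_ifs <;> first | rfl | (exfalso; omega)
            refine ⟨c, hc, ?_⟩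
            rw [hVm, mv_ind e hE (i + 1) (by omega)]
            funext p
            simp only [Pi.smul_apply, smul_eq_mul]
            rw [colC2 hn hi1 hi2 (p : ℕ)]
            unfold VF PSI
            split_ifs <;> first | (exfalso; omega) | ring
          · by_cases hEc : m = 2 * n - 1 - i
            · -- combo step
              have hVm : (fun r : Fin (2 * n + 1) => VF k n i m (r : ℕ)) =
                  (fun r : Fin (2 * n + 1) => if (r : ℕ) = i - 1 then (1:k) else 0) +
                  (fun r : Fin (2 * n + 1) => if (r : ℕ) = i then (1:k) else 0) := by
                funext r
                simp only [Pi.add_apply]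
                unfold VF PSI
                split_ifs <;> first | (exfalso; omega) | norm_num
              refine ⟨c, hc, ?_⟩
              rw [hVm, Matrix.mulVec_add, mv_ind e hE (i - 1) (by omega), mv_ind e hE i (by omega)]
              funext p
              simp only [Pi.smul_apply, Pi.add_apply, smul_eq_mul]
              rw [colC1 hn hi1 hi2 (p : ℕ) (i - 1) (by omega) (by omega) (by omega) (by omega),
                colC0 hn hi1 hi2 (p : ℕ) i (Or.inr rfl)]
              unfold VF PSI
              split_ifs <;> first | (exfalso; omega) | ring
            · -- 2n-i ≤ m : T = 2n-2-m
              have hVm : (fun r : Fin (2 * n + 1) => VF k n i m (r : ℕ)) =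
                  (fun r : Fin (2 * n + 1) => if (r : ℕ) = 2 * n - 2 - m then (1:k) else 0) := by
                funext r; unfold VF PSI; split_ifs <;> first | rfl | (exfalso; omega)
              refine ⟨c, hc, ?_⟩
              rw [hVm, mv_ind e hE (2 * n - 2 - m) (by omega)]
              funext p
              simp only [Pi.smul_apply, smul_eq_mul]
              rw [colC1 hn hi1 hi2 (p : ℕ) (2 * n - 2 - m) (by omega) (by omega) (by omega) (by omega)]
              unfold VF PSI
              split_ifs <;> first | (exfalso; omega) | ring

lemma e_pow_ne (hn : 4 ≤ n) (hi1 : 2 ≤ i) (hi2 : i + 2 ≤ n)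
    (e : Matrix (Fin (2 * n + 1)) (Fin (2 * n + 1)) k)
    (hE : ∀ p q : Fin (2 * n + 1), e p q = G k n i (p : ℕ) (q : ℕ)) :
    e ^ (2 * n - 2) ≠ 0 := by
  obtain ⟨c, hc, hv⟩ := chain hn hi1 hi2 e hE (2 * n - 2) le_rfl
  intro h0
  rw [h0, Matrix.zero_mulVec] at hv
  have h1 := congrFun hv.symm ⟨0, by omega⟩
  simp only [Pi.smul_apply, Pi.zero_apply, smul_eq_mul] at h1
  unfold VF at h1
  rw [if_neg (show ¬(2 * n - 2 ≤ 2 * n - 2 - i) by omega),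
      if_neg (show ¬(2 * n - 2 = 2 * n - 1 - i) by omega),
      if_pos (show ((⟨0, by omega⟩ : Fin (2 * n + 1)) : ℕ) = 2 * n - 2 - (2 * n - 2) by simp)] at h1
  exact hc (by rw [← mul_one c]; exact h1)

end Chain

section Rank
variable {k : Type*} [Field k] {n i : ℕ}

def SIG (n i t : ℕ) : ℕ := if t ≤ i - 2 then t + 1 else if t ≤ 2 * n - i - 3 then t + 2 else t + 3

def RHO (n i t : ℕ) : ℕ := if t ≤ i - 2 then t else if t ≤ 2 * n - i - 2 then t + 1 else t + 2

lemma Gcol_sig (hn : 4 ≤ n) (hi1 : 2 ≤ i) (hi2 : i + 2 ≤ n) (t t' : ℕ)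
    (ht : t < 2 * n - 2) (ht' : t' < 2 * n - 2) :
    G k n i (RHO n i t') (SIG n i t) =
      if t' = t then (if SIG n i t ≤ n then 1 else -1) else 0 := by
  by_cases hr1 : t ≤ i - 2
  · -- σ t = t+1 ∈ [1, i-1], class C1
    have hs : SIG n i t = t + 1 := if_pos hr1
    rw [hs, colC1 hn hi1 hi2 _ (t+1) (by omega) (by omega) (by omega) (by omega),
      if_pos (show t + 1 ≤ n by omega)]
    unfold RHO
    split_ifs <;> first | rfl | (exfalso; omega)
  · by_cases hr2 : t ≤ 2 * n - i - 3
    · have hs : SIG n i t = t + 2 := by unfold SIG; rw [if_neg hr1, if_pos hr2]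
      by_cases hc2 : t = i - 1
      · -- σ t = i + 1, class C2
        rw [hs, show t + 2 = i + 1 by omega, colC2 hn hi1 hi2,
          if_pos (show i + 1 ≤ n by omega)]
        unfold RHO
        split_ifs <;> first | rfl | (exfalso; omega)
      · by_cases hle : t + 2 ≤ n
        · rw [hs, colC1 hn hi1 hi2 _ (t+2) (by omega) (by omega) (by omega) (by omega),
            if_pos hle]
          unfold RHO
          split_ifs <;> first | rfl | (exfalso; omega)
        · rw [hs, colC3 hn hi1 hi2 _ (t+2) (by omega) (by omega) (by omega),
            if_neg hle]
          unfold RHO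
          split_ifs <;> first | rfl | (exfalso; omega)
    · have hs : SIG n i t = t + 3 := by unfold SIG; rw [if_neg hr1, if_neg hr2]
      by_cases hc4 : t = 2 * n - i - 2
      · -- σ t = 2n+1-i, class C4
        rw [hs, show t + 3 = 2 * n + 1 - i by omega, colC4 hn hi1 hi2,
          if_neg (show ¬(2 * n + 1 - i ≤ n) by omega)]
        unfold RHO
        split_ifs <;> first | rfl | (exfalso; omega)
      · rw [hs, colC3 hn hi1 hi2 _ (t+3) (by omega) (by omega) (by omega),
          if_neg (show ¬(t + 3 ≤ n) by omega)]
        unfold RHO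
        split_ifs <;> first | rfl | (exfalso; omega)

lemma sig_lt (hn : 4 ≤ n) (hi1 : 2 ≤ i) (hi2 : i + 2 ≤ n) (t : ℕ) (ht : t < 2 * n - 2) :
    SIG n i t < 2 * n + 1 := by unfold SIG; split_ifs <;> omega

lemma rho_lt (hn : 4 ≤ n) (hi1 : 2 ≤ i) (hi2 : i + 2 ≤ n) (t : ℕ) (ht : t < 2 * n - 2) :
    RHO n i t < 2 * n + 1 := by unfold RHO; split_ifs <;> omega

lemma rank_lower (hn : 4 ≤ n) (hi1 : 2 ≤ i) (hi2 : i + 2 ≤ n)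
    (e : Matrix (Fin (2 * n + 1)) (Fin (2 * n + 1)) k)
    (hE : ∀ p q : Fin (2 * n + 1), e p q = G k n i (p : ℕ) (q : ℕ)) :
    2 * n - 2 ≤ e.rank := by
  classical
  set y : Fin (2 * n - 2) → (Fin (2 * n + 1) → k) :=
    fun t => fun p : Fin (2 * n + 1) => G k n i (p : ℕ) (SIG n i (t : ℕ)) with hy
  have hmem : ∀ t : Fin (2 * n - 2), y t ∈ LinearMap.range e.mulVecLin := by
    intro t
    refine ⟨(fun r : Fin (2 * n + 1) => if (r : ℕ) = SIG n i (t : ℕ) then (1:k) else 0), ?_⟩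
    rw [Matrix.mulVecLin_apply, mv_ind e hE _ (sig_lt hn hi1 hi2 _ t.isLt)]
  have hli : LinearIndependent k y := by
    rw [Fintype.linearIndependent_iff]
    intro g hg t0
    have h0 := congrFun hg ⟨RHO n i (t0 : ℕ), rho_lt hn hi1 hi2 _ t0.isLt⟩
    simp only [Finset.sum_apply, Pi.smul_apply, smul_eq_mul, Pi.zero_apply, hy] at h0
    rw [Finset.sum_eq_single t0] at h0
    · rw [Gcol_sig hn hi1 hi2 _ _ t0.isLt t0.isLt, if_pos rfl] at h0
      rcases le_or_gt (SIG n i (t0:ℕ)) n with hle | hlt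
      · rw [if_pos hle, mul_one] at h0; exact h0
      · rw [if_neg (by omega)] at h0
        have : g t0 * -1 = 0 := h0
        have := mul_eq_zero.mp this
        simpa using this
    · intro b _ hb
      rw [Gcol_sig hn hi1 hi2 _ _ b.isLt t0.isLt,
        if_neg (show ¬((t0 : ℕ) = (b : ℕ)) from fun h => hb (Fin.ext h).symm), mul_zero]
    · intro h; exact absurd (Finset.mem_univ _) h
  have hli' : LinearIndependent k
      (fun t : Fin (2 * n - 2) => (⟨y t, hmem t⟩ : LinearMap.range e.mulVecLin)) := by
    apply LinearIndependent.of_comp (LinearMap.range e.mulVecLin).subtype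
    exact hli
  have := hli'.fintype_card_le_finrank
  simpa [Matrix.rank] using this

lemma rank_upper (hn : 4 ≤ n) (hi1 : 2 ≤ i) (hi2 : i + 2 ≤ n)
    (e : Matrix (Fin (2 * n + 1)) (Fin (2 * n + 1)) k)
    (hE : ∀ p q : Fin (2 * n + 1), e p q = G k n i (p : ℕ) (q : ℕ)) :
    e.rank + 3 ≤ 2 * n + 1 := by
  classical
  set v : Fin 3 → (Fin (2 * n + 1) → k) := fun t r =>
    if (t : ℕ) = 0 then (if (r : ℕ) = 0 then 1 else 0)
    else if (t : ℕ) = 1 then (if (r : ℕ) = i then 1 else 0)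
    else ((if (r : ℕ) = 2 * n + 1 - i then 1 else 0) - (if (r : ℕ) = 2 * n - i then 1 else 0)) with hv
  have hker : ∀ t : Fin 3, v t ∈ LinearMap.ker e.mulVecLin := by
    intro t
    rw [LinearMap.mem_ker, Matrix.mulVecLin_apply]
    match t with
    | 0 =>
      have : v 0 = (fun r : Fin (2 * n + 1) => if (r : ℕ) = 0 then (1:k) else 0) := by
        funext r; simp [hv]
      rw [this, mv_ind e hE 0 (by omega)]
      funext p
      rw [colC0 hn hi1 hi2 _ 0 (Or.inl rfl)]; rfl
    | 1 =>
      have : v 1 = (fun r : Fin (2 * n + 1) => if (r : ℕ) = i then (1:k) else 0) := by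
        funext r; simp [hv]
      rw [this, mv_ind e hE i (by omega)]
      funext p
      rw [colC0 hn hi1 hi2 _ i (Or.inr rfl)]; rfl
    | 2 =>
      have : v 2 = (fun r : Fin (2 * n + 1) => if (r : ℕ) = 2 * n + 1 - i then (1:k) else 0) -
          (fun r : Fin (2 * n + 1) => if (r : ℕ) = 2 * n - i then (1:k) else 0) := by
        funext r; simp [hv]
      rw [this, Matrix.mulVec_sub, mv_ind e hE (2 * n + 1 - i) (by omega),
        mv_ind e hE (2 * n - i) (by omega)]
      funext p
      simp only [Pi.sub_apply, Pi.zero_apply]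
      rw [colC4 hn hi1 hi2 (p : ℕ),
        colC3 hn hi1 hi2 (p : ℕ) (2 * n - i) (by omega) (by omega) (by omega)]
      split_ifs <;> first | (exfalso; omega) | ring
  have hli : LinearIndependent k v := by
    rw [Fintype.linearIndependent_iff]
    intro g hg t0
    have key : ∀ (c : Fin (2 * n + 1)),
        g 0 * v 0 c + g 1 * v 1 c + g 2 * v 2 c = 0 := by
      intro c
      have h0 := congrFun hg c
      rw [Fin.sum_univ_three] at h0
      simpa only [Pi.add_apply, Pi.smul_apply, smul_eq_mul, Pi.zero_apply, add_assoc] using h0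
    have e0 := key ⟨0, by omega⟩
    have e1 := key ⟨i, by omega⟩
    have e2 := key ⟨2 * n + 1 - i, by omega⟩
    simp only [hv] at e0 e1 e2
    norm_num at e0 e1 e2
    rw [if_neg (show ¬(0 = i) by omega), if_neg (show ¬(0 = 2*n+1-i) by omega),
        if_neg (show ¬(0 = 2*n-i) by omega)] at e0
    rw [if_neg (show ¬(i = 0) by omega), if_neg (show ¬(i = 2*n+1-i) by omega),
        if_neg (show ¬(i = 2*n-i) by omega)] at e1
    rw [if_neg (show ¬(2*n+1-i = 0) by omega), if_neg (show ¬(2*n+1-i = i) by omega),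
        if_neg (show ¬(2*n+1-i = 2*n-i) by omega)] at e2
    have h0 : g 0 = 0 := by linear_combination e0
    have h1 : g 1 = 0 := by linear_combination e1
    have h2 : g 2 = 0 := by linear_combination e2
    fin_cases t0 <;> assumption
  have hli' : LinearIndependent k
      (fun t : Fin 3 => (⟨v t, hker t⟩ : LinearMap.ker e.mulVecLin)) := by
    apply LinearIndependent.of_comp (LinearMap.ker e.mulVecLin).subtype
    exact hli
  have h3 : 3 ≤ Module.finrank k (LinearMap.ker e.mulVecLin) := by
    simpa using hli'.fintype_card_le_finrank
  have hrn := LinearMap.finrank_range_add_finrank_ker e.mulVecLin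
  rw [Module.finrank_fintype_fun_eq_card, Fintype.card_fin] at hrn
  have : e.rank = Module.finrank k (LinearMap.range e.mulVecLin) := rfl
  omega

end Rank

/-- For `n ≥ 4`, `2 ≤ i ≤ n-2` and `char k ≠ 2`, the matrix
`e = Σ_{j=1, j≠i}^{n-1} (E_{j,j+1} - E_{-(j+1),-j}) + (E_{n,0} - E_{0,-n})
      + (E_{i,i+2} - E_{-(i+2),-i})`
lies in `so_{2n+1}(k)`, satisfies `e^{2n-1} = 0`, `e^{2n-2} ≠ 0` and `rank e = 2n - 2`;
consequently `e` is nilpotent of Jordan type `(2n-1, 1, 1)`, i.e. `e` lies in the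
subregular nilpotent orbit of `so_{2n+1}(k)`. -/
theorem subregular_so_odd_interior_node {k : Type*} [Field k] [IsAlgClosed k]
    (hchar : ringChar k ≠ 2) {n i : ℕ} (hn : 4 ≤ n) (hi1 : 2 ≤ i) (hi2 : i ≤ n - 2)
    (e : Matrix (Fin (2 * n + 1)) (Fin (2 * n + 1)) k)
    (he : e = (∑ j ∈ (Finset.Icc 1 (n - 1)).erase i,
        (Eodd n k (j : ℤ) ((j : ℤ) + 1) - Eodd n k (-((j : ℤ) + 1)) (-(j : ℤ)))) +
      (Eodd n k (n : ℤ) 0 - Eodd n k 0 (-(n : ℤ))) +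
      (Eodd n k (i : ℤ) ((i : ℤ) + 2) - Eodd n k (-((i : ℤ) + 2)) (-(i : ℤ)))) :
    eᵀ * Jodd n k + Jodd n k * e = 0 ∧
    e ^ (2 * n - 1) = 0 ∧ e ^ (2 * n - 2) ≠ 0 ∧
    e.rank = 2 * n - 2 := by
  have hi2' : i + 2 ≤ n := by omega
  have hE : ∀ p q : Fin (2 * n + 1), e p q = G k n i (p : ℕ) (q : ℕ) :=
    e_entry hn hi1 hi2' e he
  refine ⟨so_condition hn hi1 hi2' e hE, e_nilpotent hn hi1 hi2' e hE,
    e_pow_ne hn hi1 hi2' e hE, ?_⟩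
  have h1 := rank_lower hn hi1 hi2' e hE
  have h2 := rank_upper hn hi1 hi2' e hE
  omega
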